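/- Suppose (BR) holds. Then ∑_{j=1}^{ℓ} d_j(1 − c_j) is even; equivalently ∑_{j=1}^{ℓ} d_j ≡ ∑_{j=1}^{ℓ} c_j d_j (mod 2). -/

import Mathlib

open LaurentPolynomial Finset

/-- `r a = X^{2a} + X^{-2a}` in `ℤ[X, X⁻¹]`, where `X` plays the role of `ζ^{1/2}`. -/
noncomputable def rLaurent (a : ℤ) : LaurentPolynomial ℤ := T (2 * a) + T (-(2 * a))

/-- `σ₁(d) = ∑_j r(d_j)`. -/
noncomputable def sigma1 {ℓ : ℕ} (d : Fin ℓ → ℤ) : LaurentPolynomial ℤ :=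
  ∑ j, rLaurent (d j)

/-- `σ₂(d) = ∑_{i < j} r(d_i) r(d_j)`. -/
noncomputable def sigma2 {ℓ : ℕ} (d : Fin ℓ → ℤ) : LaurentPolynomial ℤ :=
  ∑ i, ∑ j ∈ univ.filter (fun j => i < j), rLaurent (d i) * rLaurent (d j)

/-- sign `(-1)^n` for an integer `n`. -/
def eps (n : ℤ) : ℤ := (((-1 : ℤˣ) ^ n : ℤˣ) : ℤ)

lemma eps_add (a b : ℤ) : eps (a + b) = eps a * eps b := by
  simp [eps, zpow_add]

lemma eps_neg (n : ℤ) : eps (-n) = eps n := by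
  simp [eps, zpow_neg, Int.units_inv_eq_self]

lemma eps_two_mul (a : ℤ) : eps (2 * a) = 1 := by
  have h2 : ((-1 : ℤˣ) ^ (2 : ℤ)) = 1 := by decide
  have : ((-1 : ℤˣ) ^ (2 * a)) = 1 := by
    rw [zpow_mul, h2, one_zpow]
  simp [eps, this]

lemma eps_natCast (n : ℕ) : eps (n : ℤ) = (-1 : ℤ) ^ n := by
  simp [eps, zpow_natCast]

lemma eps_sum {ι : Type*} (s : Finset ι) (g : ι → ℤ) :
    eps (∑ j ∈ s, g j) = ∏ j ∈ s, eps (g j) := by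
  classical
  induction s using Finset.induction with
  | empty => simp [eps]
  | insert _ _ h ih => rw [Finset.sum_insert h, Finset.prod_insert h, eps_add, ih]

/-- The substitution `X ↦ -X` as an algebra endomorphism of `ℤ[X,X⁻¹]`. -/
noncomputable def negX : LaurentPolynomial ℤ →ₐ[ℤ] LaurentPolynomial ℤ :=
  AddMonoidAlgebra.lift ℤ _ ℤ
    { toFun := fun n => eps (Multiplicative.toAdd n) • T (Multiplicative.toAdd n)
      map_one' := by simp [eps]
      map_mul' := fun a b => by
        simp only [toAdd_mul, eps_add]
        rw [T_add, smul_mul_smul_comm] }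

lemma negX_T (n : ℤ) : negX (T n) = eps n • T n := by
  rw [T]
  rw [negX, AddMonoidAlgebra.lift_single]
  simp

lemma negX_Tsub (x : ℤ) : negX (T x - T (-x)) = eps x • (T x - T (-x) : LaurentPolynomial ℤ) := by
  rw [map_sub, negX_T, negX_T, eps_neg, smul_sub]

lemma negX_rLaurent (a : ℤ) : negX (rLaurent a) = rLaurent a := by
  rw [rLaurent, map_add, negX_T, negX_T, eps_neg, eps_two_mul, one_smul, one_smul]

lemma negX_sigma1 {ℓ : ℕ} (d : Fin ℓ → ℤ) : negX (sigma1 d) = sigma1 d := by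
  rw [sigma1, map_sum]
  exact Finset.sum_congr rfl fun j _ => negX_rLaurent _

lemma negX_sigma2 {ℓ : ℕ} (d : Fin ℓ → ℤ) : negX (sigma2 d) = sigma2 d := by
  rw [sigma2, map_sum]
  refine Finset.sum_congr rfl fun i _ => ?_
  rw [map_sum]
  exact Finset.sum_congr rfl fun j _ => by rw [map_mul, negX_rLaurent, negX_rLaurent]

lemma prod_smul_int {ι : Type*} (s : Finset ι) (b : ι → ℤ) (f : ι → LaurentPolynomial ℤ) :
    ∏ i ∈ s, b i • f i = (∏ i ∈ s, b i) • ∏ i ∈ s, f i := by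
  classical
  induction s using Finset.cons_induction_on with
  | empty => simp
  | cons _ _ hj ih => rw [Finset.prod_cons, Finset.prod_cons, Finset.prod_cons, ih, smul_mul_smul_comm]

lemma intCast_LP_eq_zero {x : ℤ} (h : ((x : LaurentPolynomial ℤ)) = 0) : x = 0 := by
  have h3 : ((x : LaurentPolynomial ℤ)).coeff (0:ℤ) = (0 : LaurentPolynomial ℤ).coeff (0:ℤ) := by rw [h]
  rw [AddMonoidAlgebra.intCast_def, AddMonoidAlgebra.coeff_single, Finsupp.single_eq_same] at h3
  simpa using h3

lemma T_sub_T_ne_zero {a : ℤ} (ha : a ≠ 0) : (T a - T (-a) : LaurentPolynomial ℤ) ≠ 0 := by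
  intro h
  have h1 : ((T a - T (-a) : LaurentPolynomial ℤ)).coeff a = 0 := by rw [h]; rfl
  rw [AddMonoidAlgebra.coeff_sub, Finsupp.sub_apply] at h1
  simp only [T, AddMonoidAlgebra.coeff_single, Finsupp.single_apply] at h1
  simp [(show ¬(-a = a) by omega)] at h1

theorem stmt_3 (ℓ : ℕ) (hℓ : 1 ≤ ℓ) (hℓ24 : ℓ ≤ 24) (k : ℕ) (hk : k = 24 - ℓ)
    (m : ℕ) (hm : 1 ≤ m) (c d : Fin ℓ → ℕ)
    (hc : ∀ j, 1 ≤ c j) (hd : ∀ j, 1 ≤ d j)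
    (hBR : (m : LaurentPolynomial ℤ) *
        ∏ j, (T ((c j : ℤ) * (d j : ℤ)) - T (-((c j : ℤ) * (d j : ℤ)))) =
      (sigma2 (fun j => (d j : ℤ)) +
          ((2 * (k : ℤ) - 1 : ℤ) : LaurentPolynomial ℤ) * sigma1 (fun j => (d j : ℤ)) +
          ((2 * (k : ℤ) ^ 2 - 3 * (k : ℤ) + (ℓ : ℤ) : ℤ) : LaurentPolynomial ℤ)) *
        ∏ j, (T ((d j : ℤ)) - T (-(d j : ℤ)))) :
    Even (∑ j, (d j : ℤ) * (1 - (c j : ℤ))) ∧ (∑ j, d j) % 2 = (∑ j, c j * d j) % 2 := by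
  set A : ℕ := ∑ j, c j * d j with hA
  set B : ℕ := ∑ j, d j with hB
  set P : LaurentPolynomial ℤ :=
    (m : LaurentPolynomial ℤ) *
      ∏ j, (T ((c j : ℤ) * (d j : ℤ)) - T (-((c j : ℤ) * (d j : ℤ)))) with hP
  set Q : LaurentPolynomial ℤ :=
    (sigma2 (fun j => (d j : ℤ)) +
        ((2 * (k : ℤ) - 1 : ℤ) : LaurentPolynomial ℤ) * sigma1 (fun j => (d j : ℤ)) +
        ((2 * (k : ℤ) ^ 2 - 3 * (k : ℤ) + (ℓ : ℤ) : ℤ) : LaurentPolynomial ℤ)) with hQ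
  -- negX applied to the left-hand side
  have h1 : negX P = eps (A : ℤ) • P := by
    rw [hP, map_mul, map_natCast, map_prod]
    rw [Finset.prod_congr rfl fun j _ => negX_Tsub ((c j : ℤ) * (d j : ℤ))]
    rw [prod_smul_int]
    have hs : ∑ j, (c j : ℤ) * (d j : ℤ) = ((A : ℕ) : ℤ) := by
      rw [hA]; push_cast; rfl
    rw [← eps_sum, hs, mul_smul_comm]
  -- negX applied to the right-hand side
  have h2 : negX (Q * ∏ j, (T ((d j : ℤ)) - T (-(d j : ℤ)))) =
      eps (B : ℤ) • (Q * ∏ j, (T ((d j : ℤ)) - T (-(d j : ℤ)))) := by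
    rw [map_mul, map_prod]
    have hQfix : negX Q = Q := by
      rw [hQ, map_add, map_add, map_mul, map_intCast, map_intCast, negX_sigma1, negX_sigma2]
    rw [hQfix]
    rw [Finset.prod_congr rfl fun j _ => negX_Tsub ((d j : ℤ))]
    rw [prod_smul_int]
    have hs : ∑ j, (d j : ℤ) = ((B : ℕ) : ℤ) := by
      rw [hB]; push_cast; rfl
    rw [← eps_sum, hs, mul_smul_comm]
  have key : eps (A : ℤ) • P = eps (B : ℤ) • P := by
    calc eps (A : ℤ) • P = negX P := h1.symm
      _ = negX (Q * ∏ j, (T ((d j : ℤ)) - T (-(d j : ℤ)))) := by rw [hBR]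
      _ = eps (B : ℤ) • (Q * ∏ j, (T ((d j : ℤ)) - T (-(d j : ℤ)))) := h2
      _ = eps (B : ℤ) • P := by rw [← hBR]
  -- P is nonzero
  have hPne : P ≠ 0 := by
    rw [hP]
    apply mul_ne_zero
    · intro h
      have : ((m : ℤ) : LaurentPolynomial ℤ) = 0 := by exact_mod_cast h
      have := intCast_LP_eq_zero this
      omega
    · rw [Finset.prod_ne_zero_iff]
      intro j _
      apply T_sub_T_ne_zero
      have h1 : 1 ≤ (c j : ℤ) := by exact_mod_cast hc j
      have h2 : 1 ≤ (d j : ℤ) := by exact_mod_cast hd j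
      nlinarith
  -- cancel P
  have hcast : ((eps (A : ℤ) : ℤ) : LaurentPolynomial ℤ) * P
      = ((eps (B : ℤ) : ℤ) : LaurentPolynomial ℤ) * P := by
    rw [← zsmul_eq_mul, ← zsmul_eq_mul]
    exact key
  have heq : ((eps (A : ℤ) : ℤ) : LaurentPolynomial ℤ)
      = ((eps (B : ℤ) : ℤ) : LaurentPolynomial ℤ) := mul_right_cancel₀ hPne hcast
  have heps : eps (A : ℤ) = eps (B : ℤ) := by
    have : (((eps (A : ℤ) - eps (B : ℤ) : ℤ)) : LaurentPolynomial ℤ) = 0 := by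
      push_cast
      rw [heq]; ring
    have := intCast_LP_eq_zero this
    omega
  have hpow : (-1 : ℤ) ^ A = (-1 : ℤ) ^ B := by
    rw [← eps_natCast, ← eps_natCast, heps]
  -- extract parity
  have hmod : B % 2 = A % 2 := by
    rcases Nat.even_or_odd A with hA' | hA' <;> rcases Nat.even_or_odd B with hB' | hB'
    · rw [Nat.even_iff] at hA' hB'; omega
    · rw [hA'.neg_one_pow, hB'.neg_one_pow] at hpow; norm_num at hpow
    · rw [hA'.neg_one_pow, hB'.neg_one_pow] at hpow; norm_num at hpow
    · rw [Nat.odd_iff] at hA' hB'; omega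
  refine ⟨?_, hmod⟩
  have hsum : ∑ j, (d j : ℤ) * (1 - (c j : ℤ)) = (B : ℤ) - (A : ℤ) := by
    rw [hA, hB]
    push_cast
    rw [← Finset.sum_sub_distrib]
    exact Finset.sum_congr rfl fun j _ => by ring
  rw [hsum, Int.even_sub]
  constructor <;> intro h
  · rw [Int.even_coe_nat, Nat.even_iff] at h ⊢; omega
  · rw [Int.even_coe_nat, Nat.even_iff] at h ⊢; omega
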